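/- If a torsion-free group G is uniquely p-radicable, then every finite-index subgroup of G is uniquely p-radicable. -/
import Mathlib

/-- If a torsion-free group `G` is uniquely `p`-radicable, then every finite-index
subgroup of `G` is uniquely `p`-radicable. -/
theorem finite_index_subgroup_uniquely_radicable
    (p : ℕ) (hp : p.Prime) (G : Type*) [Group G]
    (htf : ∀ g : G, g ≠ 1 → ¬ IsOfFinOrder g)
    (hrad : ∀ g : G, ∃! h : G, h ^ p = g)
    (H : Subgroup G) (hH : H.FiniteIndex) :
    ∀ g : H, ∃! h : H, h ^ p = g := by
  intro g
  obtain ⟨h, hh, huniq⟩ := hrad (g : G)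
  -- the normal core
  set N := H.normalCore with hN
  haveI : H.FiniteIndex := hH
  haveI : N.FiniteIndex := Subgroup.finiteIndex_normalCore H
  -- the p-power map on G ⧸ N is surjective, hence injective
  have hsurj : Function.Surjective (fun x : G ⧸ N => x ^ p) := by
    intro x
    obtain ⟨y, rfl⟩ := QuotientGroup.mk_surjective x
    obtain ⟨r, hr, -⟩ := hrad y
    refine ⟨(r : G ⧸ N), ?_⟩
    show ((QuotientGroup.mk' N) r) ^ p = _
    rw [← map_pow, hr]
    rfl
  have hinj : Function.Injective (fun x : G ⧸ N => x ^ p) :=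
    Finite.injective_iff_surjective.mpr hsurj
  -- p does not divide the index of N
  have hndvd : ¬ p ∣ Nat.card (G ⧸ N) := by
    intro hdvd
    haveI := Fact.mk hp
    obtain ⟨q, hq⟩ := exists_prime_orderOf_dvd_card' p hdvd
    have : q ^ p = (1 : G ⧸ N) ^ p := by
      rw [one_pow, ← hq, pow_orderOf_eq_one]
    have := hinj this
    rw [this, orderOf_one] at hq
    exact hp.one_lt.ne' hq.symm
  -- h ^ (index of N) ∈ H
  have hidx : N.index = Nat.card (G ⧸ N) := rfl
  have h1 : h ^ N.index ∈ H := H.normalCore_le (N.pow_index_mem h)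
  have h2 : h ^ p ∈ H := hh ▸ g.2
  -- coprimality gives h ∈ H
  have hcop : Nat.Coprime p N.index := by
    rw [hp.coprime_iff_not_dvd]
    rwa [hidx]
  have hmem : h ∈ H := by
    obtain ⟨a, b, hab⟩ : ∃ a b : ℤ, a * p + b * N.index = 1 := by
      refine ⟨Nat.gcdA p N.index, Nat.gcdB p N.index, ?_⟩
      have := Nat.gcd_eq_gcd_ab p N.index
      rw [hcop] at this
      push_cast at this ⊢
      linarith
    have : h = (h ^ p) ^ a * (h ^ N.index) ^ b := by
      rw [← zpow_natCast, ← zpow_natCast, ← zpow_mul, ← zpow_mul, ← zpow_add,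
        mul_comm (p : ℤ), mul_comm (N.index : ℤ), hab, zpow_one]
    rw [this]
    exact H.mul_mem (H.zpow_mem h2 a) (H.zpow_mem h1 b)
  refine ⟨⟨h, hmem⟩, ?_, ?_⟩
  · ext
    exact hh
  · intro y hy
    have hy' : (y : G) ^ p = (g : G) := by exact_mod_cast congrArg Subtype.val hy
    ext
    exact huniq (y : G) hy'
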